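/- Explicit solution of the Riccati equation in the Obizhaeva–Wang model with risk aversion (Example 5.1): The function K satisfies: the denominator (ρ/2+λ)·tanh(√λ·ρ·(T−s)/√(λ+ρ)) + √(λ(ρ+λ)) is strictly positive for all s∈[0,T]; K(T)=1/2; 0 < K(s) ≤ 1/2 for all s∈[0,T]; and K is differentiable on [0,T] with K′(s) = (ρ²/(ρ+λ))·K(s)² + (2λρ/(ρ+λ))·K(s) − λρ/(ρ+λ) for every s∈[0,T]. -/

import Mathlib

open Set

noncomputable section

lemma my_hasDerivAt_tanh (x : ℝ) : HasDerivAt Real.tanh (1 - Real.tanh x ^ 2) x := by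
  have h : ∀ y, Real.tanh y = Real.sinh y / Real.cosh y := fun y => Real.tanh_eq_sinh_div_cosh y
  have h1 : HasDerivAt Real.tanh ((Real.cosh x * Real.cosh x - Real.sinh x * Real.sinh x)/ Real.cosh x ^ 2) x := by
    have := (Real.hasDerivAt_sinh x).div (Real.hasDerivAt_cosh x) (Real.cosh_pos x).ne'
    have e : Real.tanh = fun y => Real.sinh y / Real.cosh y := funext h
    rw [e]; exact this
  convert h1 using 1
  have hc := (Real.cosh_pos x).ne'
  have h2 := Real.cosh_sq_sub_sinh_sq x
  rw [h]
  field_simp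

lemma my_tanh_nonneg {x : ℝ} (hx : 0 ≤ x) : 0 ≤ Real.tanh x := by
  rw [Real.tanh_eq_sinh_div_cosh]
  exact div_nonneg (Real.sinh_nonneg_iff.2 hx) (Real.cosh_pos x).le


/-- explicit solution of the Riccati equation in the Obizhaeva–Wang
model with risk aversion, Example 5.1: for `T > 0`, `lam > 0`, `ρ > 0` and
`K(s) = (1/2) (lam · tanh(√lam ρ (T-s)/√(lam+ρ)) + √(lam(ρ+lam)))
        / ((ρ/2+lam) · tanh(√lam ρ (T-s)/√(lam+ρ)) + √(lam(ρ+lam)))`,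
the denominator is strictly positive on `[0,T]`, `K(T) = 1/2`, `0 < K ≤ 1/2` on `[0,T]`,
and `K` is differentiable with
`K'(s) = (ρ²/(ρ+lam)) K(s)² + (2 lam ρ/(ρ+lam)) K(s) - lam ρ/(ρ+lam)` for every
`s ∈ [0,T]`. -/
theorem obizhaeva_wang_riccati_solution
    (T lam ρ : ℝ) (hT : 0 < T) (hlam : 0 < lam) (hρ : 0 < ρ)
    (K : ℝ → ℝ)
    (hK : ∀ s, K s =
      (1/2) * (lam * Real.tanh (Real.sqrt lam * ρ * (T - s) / Real.sqrt (lam + ρ))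
          + Real.sqrt (lam * (ρ + lam)))
        / ((ρ/2 + lam) * Real.tanh (Real.sqrt lam * ρ * (T - s) / Real.sqrt (lam + ρ))
          + Real.sqrt (lam * (ρ + lam)))) :
    (∀ s ∈ Icc 0 T,
      0 < (ρ/2 + lam) * Real.tanh (Real.sqrt lam * ρ * (T - s) / Real.sqrt (lam + ρ))
        + Real.sqrt (lam * (ρ + lam))) ∧
    K T = 1/2 ∧
    (∀ s ∈ Icc 0 T, 0 < K s ∧ K s ≤ 1/2) ∧
    (∀ s ∈ Icc 0 T,
      HasDerivAt K
        (ρ ^ 2 / (ρ + lam) * K s ^ 2 + 2 * lam * ρ / (ρ + lam) * K s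
          - lam * ρ / (ρ + lam)) s) := by
  set c := Real.sqrt (lam * (ρ + lam)) with hcdef
  have hlr : (0:ℝ) < lam + ρ := by linarith
  have hc : 0 < c := Real.sqrt_pos.2 (by positivity)
  have hc2 : c ^ 2 = lam * (ρ + lam) := Real.sq_sqrt (by positivity)
  set a := Real.sqrt lam * ρ / Real.sqrt (lam + ρ) with hadef
  have ha : 0 < a := by
    apply div_pos (mul_pos (Real.sqrt_pos.2 hlam) hρ) (Real.sqrt_pos.2 hlr)
  have hac : a * c = ρ * lam := by
    have h1 : c = Real.sqrt lam * Real.sqrt (lam + ρ) := by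
      rw [hcdef, show lam * (ρ + lam) = lam * (lam + ρ) by ring, Real.sqrt_mul hlam.le]
    have hs1 : Real.sqrt lam * Real.sqrt lam = lam := Real.mul_self_sqrt hlam.le
    have hs2 : Real.sqrt (lam + ρ) ≠ 0 := (Real.sqrt_pos.2 hlr).ne'
    rw [hadef, h1]
    field_simp
    linear_combination hs1
  -- u nonneg on Icc
  have hu_nonneg : ∀ s ∈ Icc 0 T, 0 ≤ Real.tanh (Real.sqrt lam * ρ * (T - s) / Real.sqrt (lam + ρ)) := by
    intro s hs
    apply my_tanh_nonneg
    have : 0 ≤ T - s := by linarith [hs.2]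
    positivity
  have hDpos : ∀ s ∈ Icc 0 T,
      0 < (ρ/2 + lam) * Real.tanh (Real.sqrt lam * ρ * (T - s) / Real.sqrt (lam + ρ)) + c := by
    intro s hs
    have := hu_nonneg s hs
    nlinarith
  refine ⟨hDpos, ?_, ?_, ?_⟩
  · rw [hK T]
    simp [Real.tanh_zero, hc.ne']
  · intro s hs
    have hu := hu_nonneg s hs
    have hD := hDpos s hs
    set u := Real.tanh (Real.sqrt lam * ρ * (T - s) / Real.sqrt (lam + ρ))
    constructor
    · rw [hK s]
      have hN : 0 < lam * u + c := by nlinarith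
      positivity
    · rw [hK s, div_le_iff₀ hD]
      nlinarith
  · intro s hs
    have hu := hu_nonneg s hs
    have hD := hDpos s hs
    have hKeq : K = fun t => (1/2) * (lam * Real.tanh (Real.sqrt lam * ρ * (T - t) / Real.sqrt (lam + ρ)) + c)
        / ((ρ/2 + lam) * Real.tanh (Real.sqrt lam * ρ * (T - t) / Real.sqrt (lam + ρ)) + c) :=
      funext hK
    set u := fun t => Real.tanh (Real.sqrt lam * ρ * (T - t) / Real.sqrt (lam + ρ)) with hudef
    -- derivative of inner argument
    have hg : HasDerivAt (fun t => Real.sqrt lam * ρ * (T - t) / Real.sqrt (lam + ρ)) (-a) s := by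
      have h1 : HasDerivAt (fun t : ℝ => T - t) (-1) s := by
        exact (hasDerivAt_id' s).const_sub T
      have h2 := ((h1.const_mul (Real.sqrt lam * ρ)).div_const (Real.sqrt (lam + ρ)))
      have e : -a = Real.sqrt lam * ρ * -1 / Real.sqrt (lam + ρ) := by rw [hadef]; ring
      rw [e]; exact h2
    have hu' : HasDerivAt u (-a * (1 - (u s) ^ 2)) s := by
      have := (my_hasDerivAt_tanh (Real.sqrt lam * ρ * (T - s) / Real.sqrt (lam + ρ))).comp s hg
      have e : -a * (1 - (u s) ^ 2) = (1 - Real.tanh (Real.sqrt lam * ρ * (T - s) / Real.sqrt (lam + ρ)) ^ 2) * -a := by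
        simp only [hudef]; ring
      rw [e]; exact this
    have hN' : HasDerivAt (fun t => (1/2) * (lam * u t + c)) ((1/2) * (lam * (-a * (1 - (u s) ^ 2)))) s := by
      exact (((hu'.const_mul lam).add_const c).const_mul (1/2))
    have hD' : HasDerivAt (fun t => (ρ/2 + lam) * u t + c) ((ρ/2 + lam) * (-a * (1 - (u s) ^ 2))) s :=
      (hu'.const_mul (ρ/2 + lam)).add_const c
    have hKd : HasDerivAt K
        (((1/2) * (lam * (-a * (1 - (u s) ^ 2))) * ((ρ/2 + lam) * u s + c)
          - (1/2) * (lam * u s + c) * ((ρ/2 + lam) * (-a * (1 - (u s) ^ 2))))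
          / ((ρ/2 + lam) * u s + c) ^ 2) s := by
      rw [hKeq]
      exact hN'.div hD' hD.ne'
    have hKs : K s = (1/2) * (lam * u s + c) / ((ρ/2 + lam) * u s + c) := hK s
    have hrl : (ρ + lam) ≠ 0 := by positivity
    set U := u s with hUdef
    set N := lam * U + c with hNdef
    set D := (ρ/2 + lam) * U + c with hDdef
    have hDne : D ≠ 0 := hD.ne'
    clear_value U N D a c
    have key : (ρ + lam) * ((1/2) * (lam * (-a * (1 - U ^ 2))) * D
        - (1/2) * N * ((ρ/2 + lam) * (-a * (1 - U ^ 2))))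
        = ρ ^ 2 * ((1/2) * N) ^ 2 + 2 * lam * ρ * ((1/2) * N) * D - lam * ρ * D ^ 2 := by
      rw [hNdef, hDdef]
      linear_combination ((ρ + lam) * ρ * (1 - U ^ 2) / 4) * hac - (ρ ^ 2 / 4) * hc2
    have heq : ρ ^ 2 / (ρ + lam) * K s ^ 2 + 2 * lam * ρ / (ρ + lam) * K s
          - lam * ρ / (ρ + lam)
        = ((1/2) * (lam * (-a * (1 - U ^ 2))) * D
            - (1/2) * N * ((ρ/2 + lam) * (-a * (1 - U ^ 2)))) / D ^ 2 := by
      have h1 : ((1/2) * (lam * (-a * (1 - U ^ 2))) * D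
            - (1/2) * N * ((ρ/2 + lam) * (-a * (1 - U ^ 2)))) / D ^ 2
          = ((ρ + lam) * ((1/2) * (lam * (-a * (1 - U ^ 2))) * D
            - (1/2) * N * ((ρ/2 + lam) * (-a * (1 - U ^ 2))))) / ((ρ + lam) * D ^ 2) :=
        (mul_div_mul_left _ _ hrl).symm
      rw [hKs, h1, key]
      field_simp
    rw [heq]
    exact hKd
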